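/- Let 0 < R < r₀, α > 0, φ_n = α(1 + |n|/(αR))(R/r₀)^{|n|}, and let N be a positive integer. Then for every integer n with 0 ≤ n ≤ N, Σ_{l∈ℤ, l≠0} φ_{lN+n} < α · 2(1 − R/r₀)^{−2} · (1 + 2N/(αR)) · (R/r₀)^{N−n}. -/

import Mathlib

theorem stmt_16 (R r₀ α : ℝ) (hR : 0 < R) (hRr : R < r₀) (hα : 0 < α)
    (φ : ℤ → ℝ) (hφ : ∀ n : ℤ, φ n = α * (1 + |(n : ℝ)| / (α * R)) * (R / r₀) ^ n.natAbs)
    (N : ℕ) (hN : 0 < N) (n : ℕ) (hn : n ≤ N) :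
    ∑' l : {l : ℤ // l ≠ 0}, φ ((l : ℤ) * N + n) <
      α * (2 / (1 - R / r₀) ^ 2) * (1 + 2 * N / (α * R)) * (R / r₀) ^ (N - n) := by
  have hr₀ : 0 < r₀ := hR.trans hRr
  set q : ℝ := R / r₀ with hqdef
  have hq0 : 0 < q := div_pos hR hr₀
  have hq1 : q < 1 := (div_lt_one hr₀).mpr hRr
  set x : ℝ := q ^ N with hxdef
  have hx0 : 0 < x := pow_pos hq0 N
  have hxq : x ≤ q := by
    calc x = q ^ N := rfl
    _ ≤ q ^ 1 := pow_le_pow_of_le_one hq0.le hq1.le hN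
    _ = q := pow_one q
  have hx1 : x < 1 := lt_of_le_of_lt hxq hq1
  have hαR : 0 < α * R := mul_pos hα hR
  have h2N : (0:ℝ) ≤ 2 * N / (α * R) := by positivity
  set A : ℝ := α * (1 + 2 * N / (α * R)) * q ^ (N - n) with hAdef
  have hA0 : 0 < A := by
    apply mul_pos (mul_pos hα (by linarith)) (pow_pos hq0 _)
  set G : ℤ → ℝ := fun l => A * (l.natAbs * x ^ (l.natAbs - 1)) with hGdef
  -- per-term bound
  have key : ∀ l : ℤ, l ≠ 0 → φ (l * N + n) ≤ G l := by
    intro l hl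
    obtain ⟨j, hj⟩ : ∃ j : ℕ, l.natAbs = j + 1 := by
      have := Int.natAbs_pos.mpr hl
      exact ⟨l.natAbs - 1, by omega⟩
    have hnN : n ≤ (j + 1) * N := le_trans hn (Nat.le_mul_of_pos_left N (Nat.succ_pos j))
    set M : ℕ := (l * N + n).natAbs with hMdef
    have hmul : (j + 1) * N = N * j + N := by ring
    have hMval : M = N * j + N + n ∨ M = N * j + N - n := by
      rcases Int.natAbs_eq l with h | h
      · left
        rw [hMdef, h, hj]
        rw [show ((((j:ℕ)+1 : ℕ) : ℤ)) * (N:ℤ) + (n:ℤ) = (((N*j + N + n : ℕ)) : ℤ) by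
          push_cast; ring]
        exact Int.natAbs_natCast _
      · right
        rw [hMdef, h, hj]
        rw [show (-(((j:ℕ)+1 : ℕ) : ℤ)) * (N:ℤ) + (n:ℤ) = -((((N*j + N - n : ℕ))) : ℤ) by
          rw [Nat.cast_sub (by omega : n ≤ N*j + N)]; push_cast; ring]
        rw [Int.natAbs_neg]
        exact Int.natAbs_natCast _
    have hexp : (N - n) + N * j ≤ M := by
      rcases hMval with h | h <;> omega
    have hMub : (M : ℝ) ≤ 2 * ((j:ℝ) + 1) * N := by
      have h2 : M ≤ 2 * (N * j + N) := by rcases hMval with h | h <;> omega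
      calc (M : ℝ) ≤ ((2 * (N * j + N) : ℕ) : ℝ) := by exact_mod_cast h2
      _ = 2 * ((j:ℝ) + 1) * N := by push_cast; ring
    have habs : |(((l * N + n : ℤ)) : ℝ)| = (M : ℝ) := by
      rw [hMdef, Nat.cast_natAbs, Int.cast_abs]
    have h1 : q ^ M ≤ q ^ (N - n) * x ^ j := by
      rw [hxdef, ← pow_mul, ← pow_add]
      exact pow_le_pow_of_le_one hq0.le hq1.le hexp
    have h2 : 1 + (M : ℝ) / (α * R) ≤ ((j:ℝ) + 1) * (1 + 2 * N / (α * R)) := by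
      have hd : (M : ℝ) / (α * R) ≤ (2 * ((j:ℝ) + 1) * N) / (α * R) :=
        (div_le_div_iff_of_pos_right hαR).mpr hMub
      have hj1 : (1:ℝ) ≤ (j:ℝ) + 1 := by have : (0:ℝ) ≤ (j:ℝ) := Nat.cast_nonneg j; linarith
      have he : (2 * ((j:ℝ) + 1) * N) / (α * R) = ((j:ℝ) + 1) * (2 * N / (α * R)) := by
        ring
      rw [he] at hd
      nlinarith [mul_le_mul_of_nonneg_right hj1 h2N]
    have hM0 : (0:ℝ) ≤ 1 + (M : ℝ) / (α * R) := by positivity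
    calc φ (l * N + n) = α * (1 + (M:ℝ) / (α * R)) * q ^ M := by
          rw [hφ, habs, ← hMdef]
      _ ≤ α * (((j:ℝ) + 1) * (1 + 2 * N / (α * R))) * (q ^ (N - n) * x ^ j) := by
          apply mul_le_mul _ h1 (pow_nonneg hq0.le M) _
          · exact mul_le_mul_of_nonneg_left h2 hα.le
          · apply mul_nonneg hα.le
            apply mul_nonneg (by positivity) (by linarith)
      _ = A * (((j:ℝ) + 1) * x ^ j) := by rw [hAdef]; ring
      _ = G l := by
          rw [hGdef]; simp only [hj]; push_cast; ring
  -- strict inequality at l = -1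
  have keylt : φ ((-1 : ℤ) * N + n) < G (-1) := by
    have hval : ((-1 : ℤ) * N + n) = -(((N - n : ℕ)) : ℤ) := by
      rw [Nat.cast_sub hn]; push_cast; ring
    have hna : ((-1 : ℤ) * N + n).natAbs = N - n := by
      rw [hval, Int.natAbs_neg, Int.natAbs_natCast]
    have habs : |((((-1 : ℤ) * N + n : ℤ)) : ℝ)| = ((N - n : ℕ) : ℝ) := by
      rw [← hna, Nat.cast_natAbs, Int.cast_abs]
    have hcoef : 1 + ((N - n : ℕ) : ℝ) / (α * R) < 1 + 2 * N / (α * R) := by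
      have h1 : ((N - n : ℕ) : ℝ) < 2 * N := by
        have : ((N - n : ℕ) : ℝ) ≤ N := by exact_mod_cast Nat.sub_le N n
        have hN' : (0:ℝ) < N := by exact_mod_cast hN
        linarith
      have := (div_lt_div_iff_of_pos_right hαR).mpr h1
      linarith
    calc φ ((-1 : ℤ) * N + n)
        = α * (1 + ((N - n : ℕ) : ℝ) / (α * R)) * q ^ (N - n) := by
          rw [hφ, habs, hna]
      _ < α * (1 + 2 * N / (α * R)) * q ^ (N - n) := by
          exact mul_lt_mul_of_pos_right (mul_lt_mul_of_pos_left hcoef hα) (pow_pos hq0 _)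
      _ = G (-1) := by rw [hGdef]; norm_num; exact hAdef.symm
  -- summability facts
  have hgeom : Summable (fun j : ℕ => x ^ j) := summable_geometric_of_lt_one hx0.le hx1
  have hlin : Summable (fun j : ℕ => (j:ℝ) * x ^ j) := by
    have := summable_pow_mul_geometric_of_norm_lt_one (R := ℝ) 1
      (r := x) (by rw [Real.norm_eq_abs, abs_of_pos hx0]; exact hx1)
    simpa using this
  have hbase : Summable (fun j : ℕ => ((j:ℝ) + 1) * x ^ j) := by
    have := hlin.add hgeom
    convert this using 2 with j
    ring
  have hAbase : Summable (fun j : ℕ => A * (((j:ℝ) + 1) * x ^ j)) := hbase.mul_left A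
  have hGpos_eq : (fun j : ℕ => G ((j:ℤ) + 1)) = fun j : ℕ => A * (((j:ℝ) + 1) * x ^ j) := by
    funext j
    rw [hGdef]
    simp only
    rw [show ((j:ℤ) + 1) = (((j + 1 : ℕ)) : ℤ) by push_cast; ring, Int.natAbs_natCast]
    push_cast; ring
  have hGneg_eq : (fun j : ℕ => G (-((j:ℤ) + 1))) = fun j : ℕ => A * (((j:ℝ) + 1) * x ^ j) := by
    funext j
    rw [hGdef]
    simp only [Int.natAbs_neg]
    rw [show ((j:ℤ) + 1) = (((j + 1 : ℕ)) : ℤ) by push_cast; ring, Int.natAbs_natCast]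
    push_cast; ring
  have hGposS : Summable (fun j : ℕ => G ((j:ℤ) + 1)) := by rw [hGpos_eq]; exact hAbase
  have hGnegS : Summable (fun j : ℕ => G (-((j:ℤ) + 1))) := by rw [hGneg_eq]; exact hAbase
  have hGZ : Summable G := Summable.of_add_one_of_neg_add_one hGposS hGnegS
  have hGsub : Summable (fun l : {l : ℤ // l ≠ 0} => G l) := hGZ.subtype _
  have hFnonneg : ∀ l : {l : ℤ // l ≠ 0}, 0 ≤ φ ((l : ℤ) * N + n) := by
    intro l
    rw [hφ]
    apply mul_nonneg (mul_nonneg hα.le _) (pow_nonneg hq0.le _)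
    have : (0:ℝ) ≤ |(((l : ℤ) * N + n : ℤ) : ℝ)| / (α * R) := by positivity
    linarith
  have hFsum : Summable (fun l : {l : ℤ // l ≠ 0} => φ ((l : ℤ) * N + n)) := by
    apply Summable.of_norm_bounded hGsub
    intro l
    rw [Real.norm_eq_abs, abs_of_nonneg (hFnonneg l)]
    exact key l l.2
  -- strict tsum comparison
  have hlt : ∑' l : {l : ℤ // l ≠ 0}, φ ((l : ℤ) * N + n)
      < ∑' l : {l : ℤ // l ≠ 0}, G l := by
    refine Summable.tsum_lt_tsum (i := ⟨-1, by decide⟩) (fun l => key l l.2) ?_ hFsum hGsub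
    exact keylt
  -- compute / bound the tsum of G
  have hT : ∑' j : ℕ, ((j:ℝ) + 1) * x ^ j = 1 / (1 - x) ^ 2 := by
    have hx1' : (1:ℝ) - x ≠ 0 := by intro h; nlinarith
    have hsplit : ∑' j : ℕ, ((j:ℝ) + 1) * x ^ j
        = (∑' j : ℕ, (j:ℝ) * x ^ j) + ∑' j : ℕ, x ^ j := by
      rw [← Summable.tsum_add hlin hgeom]
      congr 1; funext j; ring
    rw [hsplit, tsum_geometric_of_lt_one hx0.le hx1,
      tsum_coe_mul_geometric_of_norm_lt_one (by rw [Real.norm_eq_abs, abs_of_pos hx0]; exact hx1)]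
    field_simp
    ring
  have hGsubval : ∑' l : {l : ℤ // l ≠ 0}, G l = 2 * A * (1 / (1 - x) ^ 2) := by
    have hsupp : Function.support G ⊆ {l : ℤ | l ≠ 0} := by
      intro l hl
      simp only [Set.mem_setOf_eq]
      intro h0
      apply hl
      rw [hGdef, h0]
      norm_num
    have h1 : ∑' l : {l : ℤ // l ≠ 0}, G l = ∑' l : ℤ, G l :=
      tsum_subtype_eq_of_support_subset hsupp
    have h2 : ∑' l : ℤ, G l = (∑' j : ℕ, G ((j:ℤ) + 1)) + G 0 + ∑' j : ℕ, G (-((j:ℤ) + 1)) :=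
      tsum_of_add_one_of_neg_add_one hGposS hGnegS
    have hG0 : G 0 = 0 := by rw [hGdef]; norm_num
    rw [h1, h2, hG0, hGpos_eq, hGneg_eq, tsum_mul_left, hT]
    ring
  have hfinal : 2 * A * (1 / (1 - x) ^ 2)
      ≤ α * (2 / (1 - q) ^ 2) * (1 + 2 * N / (α * R)) * q ^ (N - n) := by
    have hq1' : (0:ℝ) < 1 - q := by linarith
    have hx1' : (0:ℝ) < 1 - x := by linarith
    have hmono : 1 / (1 - x) ^ 2 ≤ 1 / (1 - q) ^ 2 := by
      apply one_div_le_one_div_of_le (by positivity)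
      apply pow_le_pow_left₀ hq1'.le (by linarith)
    calc 2 * A * (1 / (1 - x) ^ 2) ≤ 2 * A * (1 / (1 - q) ^ 2) := by
          apply mul_le_mul_of_nonneg_left hmono (by positivity)
      _ = α * (2 / (1 - q) ^ 2) * (1 + 2 * N / (α * R)) * q ^ (N - n) := by
          rw [hAdef]; ring
  calc ∑' l : {l : ℤ // l ≠ 0}, φ ((l : ℤ) * N + n)
      < ∑' l : {l : ℤ // l ≠ 0}, G l := hlt
    _ = 2 * A * (1 / (1 - x) ^ 2) := hGsubval
    _ ≤ α * (2 / (1 - q) ^ 2) * (1 + 2 * N / (α * R)) * q ^ (N - n) := hfinal
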